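/- Let p be a prime, g ∈ K_p, and n ≥ 1. Then the following are equivalent: (1) f ∘ g⁻¹ = f for every f ∈ U_{p^{n−1}}; (2) g acts trivially on the first n coordinates, i.e., (g x)_i = x_i for every x ∈ (ZMod p)^ℕ and every i < n. Consequently, restriction to U_{p^{n−1}} defines a faithful representation of the quotient of K_p by the pointwise stabilizer of the n-th level, by uni-triangular matrices of dimension p^{n−1} + 1. -/

import Mathlib

/-- The triangular-form predicate defining the group `K_p`. -/
def IsTriangular (p : ℕ) (g : Equiv.Perm (ℕ → ZMod p)) : Prop :=
  ∃ a : (n : ℕ) → (Fin n → ZMod p) → ZMod p,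
    ∀ (x : ℕ → ZMod p) (n : ℕ), g x n = x n + a n (fun i : Fin n => x (i : ℕ))

/-- The Kaloujnine monomial `e_n(x) = Π_i x_i^{k_i}`, where `k_0, k_1, …` are the base-`p`
digits of `n`. -/
def kalMonomial (p n : ℕ) : (ℕ → ZMod p) → ZMod p :=
  fun x => ∏ i ∈ Finset.range (n + 1), x i ^ (n / p ^ i % p)

/-- `U_n`: the `ZMod p`-linear span of the monomials `e_0, e_1, …, e_n`. -/
def Uspan (p n : ℕ) : Submodule (ZMod p) ((ℕ → ZMod p) → ZMod p) :=
  Submodule.span (ZMod p) (kalMonomial p '' {m : ℕ | m ≤ n})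

/-- for `g ∈ K_p` and `n ≥ 1`, `f ∘ g⁻¹ = f` for every `f ∈ U_{p^{n−1}}`
if and only if `g` acts trivially on the first `n` coordinates. Consequently, restriction
to `U_{p^{n−1}}` defines a faithful representation of the quotient of `K_p` by the
pointwise stabilizer of the `n`-th level, by uni-triangular matrices of dimension
`p^{n−1} + 1`. -/
theorem faithful_on_Uspan (p : ℕ) (hp : p.Prime)
    (g : Equiv.Perm (ℕ → ZMod p)) (hg : IsTriangular p g) (n : ℕ) (hn : 1 ≤ n) :
    (∀ f ∈ Uspan p (p ^ (n - 1)), (fun x => f (g.symm x)) = f) ↔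
      (∀ (x : ℕ → ZMod p) (i : ℕ), i < n → g x i = x i) := by
  constructor
  · intro h x i hi
    have hmem : kalMonomial p (p ^ i) ∈ Uspan p (p ^ (n - 1)) :=
      Submodule.subset_span ⟨p ^ i, Nat.pow_le_pow_right hp.one_lt.le (by omega), rfl⟩
    have key : ∀ y : ℕ → ZMod p, kalMonomial p (p ^ i) y = y i := by
      intro y
      unfold kalMonomial
      have hstep : ∏ j ∈ Finset.range (p ^ i + 1), y j ^ (p ^ i / p ^ j % p)
          = y i ^ (p ^ i / p ^ i % p) := by
        apply Finset.prod_eq_single_of_mem i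
        · exact Finset.mem_range.mpr (by have : i < p ^ i := Nat.lt_pow_self hp.one_lt; omega)
        · intro j hj hji
          rcases lt_or_gt_of_ne hji with hlt | hgt
          · have hdiv : p ^ i / p ^ j = p ^ (i - j) :=
              Nat.pow_div (by omega) hp.pos
            have hmod : p ^ (i - j) % p = 0 :=
              Nat.mod_eq_zero_of_dvd (dvd_pow_self p (by omega))
            rw [hdiv, hmod, pow_zero]
          · have hz : p ^ i / p ^ j = 0 :=
              Nat.div_eq_of_lt (Nat.pow_lt_pow_right hp.one_lt hgt)
            rw [hz]
            simp
      rw [hstep, Nat.div_self (Nat.pow_pos (n := i) hp.pos),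
        Nat.one_mod_eq_one.mpr hp.one_lt.ne', pow_one]
    have := congrFun (h _ hmem) (g x)
    simp only [Equiv.symm_apply_apply] at this
    rw [key, key] at this
    exact this.symm
  · intro h f hf
    have hsymm : ∀ (x : ℕ → ZMod p) (i : ℕ), i < n → g.symm x i = x i := by
      intro x i hi
      have := h (g.symm x) i hi
      rw [Equiv.apply_symm_apply] at this
      exact this.symm
    let S : Submodule (ZMod p) ((ℕ → ZMod p) → ZMod p) :=
      { carrier := {f | (fun x => f (g.symm x)) = f}
        add_mem' := by
          intro a b ha hb
          simp only [Set.mem_setOf_eq] at *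
          funext x
          simp [congrFun ha x, congrFun hb x]
        zero_mem' := rfl
        smul_mem' := by
          intro c a ha
          simp only [Set.mem_setOf_eq] at *
          funext x
          simp [congrFun ha x] }
    have hUS : Uspan p (p ^ (n - 1)) ≤ S := by
      rw [Uspan, Submodule.span_le]
      rintro _ ⟨m, hm, rfl⟩
      show (fun x => kalMonomial p m (g.symm x)) = kalMonomial p m
      funext x
      unfold kalMonomial
      apply Finset.prod_congr rfl
      intro j hj
      by_cases hjn : j < n
      · rw [hsymm x j hjn]
      · have hz : m / p ^ j = 0 := by
          apply Nat.div_eq_of_lt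
          calc m ≤ p ^ (n - 1) := hm
            _ < p ^ j := Nat.pow_lt_pow_right hp.one_lt (by omega)
        rw [hz]
        simp
    exact hUS hf
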